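/- arXiv:1504.02410 — 2 statements merged into one kernel-verified Lean document; each statement's English description precedes it below -/
import Mathlib

section
/- Let ε : ℕ → ℝ satisfy ε(n) → 0 as n → ∞, and for each i ∈ ℕ let N_i = ((3+2√2)^{2i+1} − (3−2√2)^{2i+1})/(4√2). Then each N_i is an odd positive integer, and for infinitely many indices i the number N_i is not the sum of two elements of A(ε,√2). -/
open Filter
open scoped Pointwise

/-- Distance to the nearest integer. -/
noncomputable def fpa (t : ℝ) : ℝ := |t - round t|

/-- `A ε α = {n ∈ ℕ : ‖α n²‖ ≤ ε n}`. -/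
def A (ε : ℕ → ℝ) (α : ℝ) : Set ℕ := {n : ℕ | fpa (α * (n : ℝ) ^ 2) ≤ ε n}

/-- `Nval i = ((3+2√2)^(2i+1) − (3−2√2)^(2i+1)) / (4√2)`. -/
noncomputable def Nval (i : ℕ) : ℝ :=
  ((3 + 2 * Real.sqrt 2) ^ (2 * i + 1) - (3 - 2 * Real.sqrt 2) ^ (2 * i + 1)) /
    (4 * Real.sqrt 2)

/-- Pell-type pairs: `pp i = (H_{2i+1}, P_{2i+1})`. -/
def pp : ℕ → ℕ × ℕ
  | 0 => (1, 1)
  | i + 1 => (3 * (pp i).1 + 4 * (pp i).2, 2 * (pp i).1 + 3 * (pp i).2)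

lemma pp_pos (i : ℕ) : 1 ≤ (pp i).1 ∧ 1 ≤ (pp i).2 := by
  induction i with
  | zero => exact ⟨le_refl _, le_refl _⟩
  | succ i ih => simp only [pp]; omega

lemma pp_odd (i : ℕ) : Odd (pp i).1 ∧ Odd (pp i).2 := by
  induction i with
  | zero => simp [pp]
  | succ i ih =>
    obtain ⟨⟨p, hp⟩, ⟨q, hq⟩⟩ := ih
    exact ⟨⟨3 * p + 4 * q + 3, by simp only [pp]; omega⟩,
      ⟨2 * p + 3 * q + 2, by simp only [pp]; omega⟩⟩

lemma pp_growth (i : ℕ) : i + 1 ≤ (pp i).1 := by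
  induction i with
  | zero => simp [pp]
  | succ i ih => have := (pp_pos i).2; simp only [pp]; omega

lemma pp_pell (i : ℕ) : ((pp i).1 : ℝ) ^ 2 + 1 = 2 * ((pp i).2 : ℝ) ^ 2 := by
  induction i with
  | zero => norm_num [pp]
  | succ i ih => simp only [pp]; push_cast; push_cast at ih; linear_combination ih

lemma s2 : Real.sqrt 2 ^ 2 = 2 := Real.sq_sqrt (by norm_num)

lemma pp_real (i : ℕ) :
    ((pp i).1 : ℝ) + ((pp i).2 : ℝ) * Real.sqrt 2 = (1 + Real.sqrt 2) ^ (2 * i + 1) := by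
  induction i with
  | zero => simp [pp]
  | succ i ih =>
    have h : 2 * (i + 1) + 1 = (2 * i + 1) + 2 := by ring
    rw [h, pow_add, ← ih]
    simp only [pp]; push_cast
    linear_combination (-(((pp i).1 : ℝ)) - 2 * ((pp i).2 : ℝ) - ((pp i).2 : ℝ) * Real.sqrt 2) * s2

lemma pp_real2 (i : ℕ) :
    Real.sqrt 2 * ((pp i).2 : ℝ) - ((pp i).1 : ℝ) = (Real.sqrt 2 - 1) ^ (2 * i + 1) := by
  induction i with
  | zero => simp [pp]
  | succ i ih =>
    have h : 2 * (i + 1) + 1 = (2 * i + 1) + 2 := by ring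
    rw [h, pow_add, ← ih]
    simp only [pp]; push_cast
    linear_combination ((((pp i).1 : ℝ)) + 2 * ((pp i).2 : ℝ) - ((pp i).2 : ℝ) * Real.sqrt 2) * s2

lemma pp_N (i : ℕ) : Nval i = ((pp i).1 : ℝ) * ((pp i).2 : ℝ) := by
  have hs : (0:ℝ) < Real.sqrt 2 := Real.sqrt_pos.mpr (by norm_num)
  have e1 : (3 + 2 * Real.sqrt 2) = (1 + Real.sqrt 2) ^ 2 := by linear_combination -s2
  have e2 : (3 - 2 * Real.sqrt 2) = (Real.sqrt 2 - 1) ^ 2 := by linear_combination -s2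
  rw [Nval, e1, e2, pow_right_comm, pow_right_comm (Real.sqrt 2 - 1), ← pp_real, ← pp_real2]
  field_simp
  ring

/-- `fpa` is at most the distance to any integer. -/
lemma fpa_le (t : ℝ) (z : ℤ) : fpa t ≤ |t - z| := by
  rcases eq_or_ne z (round t) with h | h
  · simp only [fpa, h]; exact le_refl _
  · have h1 : |t - round t| ≤ 1 / 2 := abs_sub_round t
    have h2 : (1:ℝ) ≤ |(round t : ℝ) - z| := by
      have hz : (1:ℤ) ≤ |round t - z| := Int.one_le_abs (sub_ne_zero.mpr h.symm)
      exact_mod_cast hz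
    have h3 : |(round t : ℝ) - z| ≤ |t - z| + |t - round t| := by
      calc |(round t : ℝ) - z| = |(t - z) - (t - round t)| := by congr 1; ring
        _ ≤ |t - z| + |t - round t| := abs_sub _ _
    simp only [fpa]; linarith

lemma fpa_nonneg (t : ℝ) : 0 ≤ fpa t := abs_nonneg _

lemma fpa_add_int (t : ℝ) (z : ℤ) : fpa (t + z) = fpa t := by
  simp only [fpa, round_add_intCast]
  congr 1
  push_cast
  ring

/-- Lipschitz-type lower bound: `fpa a - |b| ≤ fpa (a + b)`. -/
lemma fpa_lower (a b : ℝ) : fpa a - |b| ≤ fpa (a + b) := by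
  have h1 : fpa a ≤ |a - (round (a + b) : ℤ)| := fpa_le a _
  have h2 : |a - ((round (a + b) : ℤ) : ℝ)| ≤ |a + b - round (a + b)| + |b| := by
    calc |a - ((round (a + b) : ℤ) : ℝ)| = |(a + b - round (a + b)) + (-b)| := by congr 1; ring
      _ ≤ |a + b - round (a + b)| + |(-b)| := abs_add_le _ _
      _ = |a + b - round (a + b)| + |b| := by rw [abs_neg]
  simp only [fpa] at h1 ⊢; linarith

lemma fpa_min (r : ℝ) (h0 : 0 ≤ r) (h1 : r ≤ 1) : min r (1 - r) ≤ fpa r := by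
  rcases le_or_gt (round r) 0 with h | h
  · have hc : ((round r : ℤ) : ℝ) ≤ 0 := by exact_mod_cast h
    simp only [fpa]
    rw [abs_of_nonneg (by linarith)]
    have := min_le_left r (1 - r)
    linarith
  · have hc : (1:ℝ) ≤ ((round r : ℤ) : ℝ) := by exact_mod_cast h
    simp only [fpa]
    rw [abs_of_nonpos (by linarith)]
    have := min_le_right r (1 - r)
    linarith

lemma fpa_pos_irr (k : ℕ) :
    0 < fpa (Real.sqrt 2 * (k : ℝ) ^ 2 + 1 / 2 - Real.sqrt 2 / 16) := by
  rcases (fpa_nonneg (Real.sqrt 2 * (k : ℝ) ^ 2 + 1 / 2 - Real.sqrt 2 / 16)).lt_or_eq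
    with h | h
  · exact h
  exfalso
  set t := Real.sqrt 2 * (k : ℝ) ^ 2 + 1 / 2 - Real.sqrt 2 / 16 with ht
  have h0 : t = (round t : ℝ) := by
    have h' : |t - round t| = 0 := h.symm
    rw [abs_eq_zero, sub_eq_zero] at h'
    exact h'
  set z := round t with hz
  have hk : (16 * (k:ℝ)^2 - 1) ≠ 0 := by
    rcases Nat.eq_zero_or_pos k with h' | h'
    · subst h'; norm_num
    · have h1 : (1:ℝ) ≤ (k:ℝ) := by exact_mod_cast h'
      nlinarith
  have key : Real.sqrt 2 = (16 * (z:ℝ) - 8) / (16 * (k:ℝ)^2 - 1) := by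
    rw [eq_div_iff hk]
    rw [ht] at h0
    linear_combination 16 * h0
  have hmem : Real.sqrt 2 ∈ Set.range ((↑) : ℚ → ℝ) := by
    refine ⟨(16 * (z:ℚ) - 8) / (16 * (k:ℚ)^2 - 1), ?_⟩
    rw [key]
    push_cast
    ring
  exact irrational_sqrt_two hmem

lemma exists_min_pos (f : ℕ → ℝ) (hf : ∀ k, 0 < f k) (K : ℕ) :
    ∃ d > 0, ∀ k < K, d ≤ f k := by
  induction K with
  | zero => exact ⟨1, one_pos, fun k hk => absurd hk (Nat.not_lt_zero k)⟩
  | succ K ih =>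
    obtain ⟨d, hd, hdm⟩ := ih
    refine ⟨min d (f K), lt_min hd (hf K), fun k hk => ?_⟩
    rcases Nat.lt_succ_iff_lt_or_eq.mp hk with h | h
    · exact le_trans (min_le_left _ _) (hdm k h)
    · exact h ▸ min_le_right _ _

set_option maxHeartbeats 1000000 in
theorem stmt_4 (ε : ℕ → ℝ) (hε : Tendsto ε atTop (nhds 0)) :
    (∀ i : ℕ, ∃ n : ℕ, 0 < n ∧ Odd n ∧ (n : ℝ) = Nval i) ∧
    {i : ℕ | ¬ ∃ n₁ ∈ A ε (Real.sqrt 2), ∃ n₂ ∈ A ε (Real.sqrt 2),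
      ((n₁ + n₂ : ℕ) : ℝ) = Nval i}.Infinite := by
  constructor
  · intro i
    refine ⟨(pp i).1 * (pp i).2, Nat.mul_pos (pp_pos i).1 (pp_pos i).2,
      (pp_odd i).1.mul (pp_odd i).2, ?_⟩
    rw [pp_N]; push_cast; ring
  · -- threshold for ε < 1/8
    obtain ⟨K₀, hK₀⟩ := Metric.tendsto_atTop.mp hε (1/8) (by norm_num)
    have hK₀' : ∀ n, K₀ ≤ n → ε n < 1/8 := by
      intro n hn
      have := hK₀ n hn
      rw [Real.dist_eq, sub_zero] at this
      exact lt_of_le_of_lt (le_abs_self _) this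
    -- minimum of the obstruction values over k < K₀
    obtain ⟨d, hd, hdm⟩ := exists_min_pos
      (fun k => fpa (Real.sqrt 2 * (k : ℝ) ^ 2 + 1 / 2 - Real.sqrt 2 / 16))
      fpa_pos_irr K₀
    obtain ⟨M, hM⟩ := Metric.tendsto_atTop.mp hε (d/3) (by positivity)
    have hM' : ∀ n, M ≤ n → ε n < d/3 := by
      intro n hn
      have := hM n hn
      rw [Real.dist_eq, sub_zero] at this
      exact lt_of_le_of_lt (le_abs_self _) this
    obtain ⟨I₁, hI₁⟩ := exists_nat_gt (3 * ((K₀:ℝ) + 1) / d)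
    set T := max K₀ M with hT
    have hTK : K₀ ≤ T := le_max_left _ _
    have hTM : M ≤ T := le_max_right _ _
    set I := max I₁ (2 * T) with hI
    have hIci : Set.Ici I ⊆ {i : ℕ | ¬ ∃ n₁ ∈ A ε (Real.sqrt 2), ∃ n₂ ∈ A ε (Real.sqrt 2),
        ((n₁ + n₂ : ℕ) : ℝ) = Nval i} := by
      intro i hi
      simp only [Set.mem_Ici] at hi
      have hile : 2 * T ≤ i := le_trans (le_max_right _ _) hi
      have hiI₁ : I₁ ≤ i := le_trans (le_max_left _ _) hi
      simp only [Set.mem_setOf_eq]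
      rintro ⟨n₁, h₁, n₂, h₂, hsum⟩
      simp only [A, Set.mem_setOf_eq] at h₁ h₂
      -- WLOG n₂ ≤ n₁
      obtain ⟨a, b, ha, hb, hba, hab⟩ : ∃ a b : ℕ,
          fpa (Real.sqrt 2 * (a : ℝ) ^ 2) ≤ ε a ∧ fpa (Real.sqrt 2 * (b : ℝ) ^ 2) ≤ ε b ∧
          b ≤ a ∧ a + b = (pp i).1 * (pp i).2 := by
        have hN : n₁ + n₂ = (pp i).1 * (pp i).2 := by
          have hc : ((n₁ + n₂ : ℕ) : ℝ) = (((pp i).1 * (pp i).2 : ℕ) : ℝ) := by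
            rw [hsum, pp_N]; push_cast; ring
          exact_mod_cast hc
        rcases le_total n₂ n₁ with h | h
        · exact ⟨n₁, n₂, h₁, h₂, h, hN⟩
        · exact ⟨n₂, n₁, h₂, h₁, h, by omega⟩
      set x := (pp i).1 with hx
      set y := (pp i).2 with hy
      obtain ⟨m, hm⟩ := (pp_odd i).1.mul (pp_odd i).2
      have habm : a + b = 2 * m + 1 := hab.trans hm
      have hbm : b ≤ m := by omega
      have ham : m + 1 ≤ a := by omega
      have hNge : i + 1 ≤ x * y :=
        le_trans (pp_growth i) (le_mul_of_one_le_right (Nat.zero_le _) (pp_pos i).2)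
      have hNge' : i + 1 ≤ 2 * m + 1 := hm ▸ hNge
      have haK : K₀ ≤ a := by omega
      have haM : M ≤ a := by omega
      have hεa8 : ε a < 1/8 := hK₀' a haK
      have hεad : ε a < d/3 := hM' a haM
      -- real setup
      set s := Real.sqrt 2 with hsdef
      have hs2 : s ^ 2 = 2 := s2
      have hspos : 0 < s := Real.sqrt_pos.mpr (by norm_num)
      set X := (x : ℝ) with hX
      set Y := (y : ℝ) with hY
      set Kk := (b : ℝ) with hKk
      have hxyR : X ^ 2 + 1 = 2 * Y ^ 2 := pp_pell i
      have hmR : X * Y = 2 * (m : ℝ) + 1 := by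
        rw [hX, hY]; exact_mod_cast hm
      set δ := s * Y - X with hδ
      set u := X + s * Y with hu
      clear_value s X Y Kk δ u
      have hud : u * δ = 1 := by
        rw [hu, hδ]; linear_combination Y ^ 2 * hs2 - hxyR
      have hX1 : (1:ℝ) ≤ X := by rw [hX]; exact_mod_cast (pp_pos i).1
      have hY1 : (1:ℝ) ≤ Y := by rw [hY]; exact_mod_cast (pp_pos i).2
      have hsY : 0 < s * Y := mul_pos hspos (by linarith)
      have hupos : 0 < u := by rw [hu]; linarith
      have hδpos : 0 < δ := by
        rcases lt_trichotomy δ 0 with h | h | h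
        · have := mul_neg_of_pos_of_neg hupos h; linarith
        · rw [h, mul_zero] at hud; norm_num at hud
        · exact h
      have hδeq : δ = 1 / u := by
        rw [eq_div_iff hupos.ne']; linear_combination hud
      have huge : ((i:ℝ) + 1) ≤ u := by
        have hgrow : ((i:ℝ) + 1) ≤ X := by rw [hX]; exact_mod_cast pp_growth i
        rw [hu]; linarith
      have hδle : δ ≤ 1 / ((i:ℝ) + 1) := by
        rw [hδeq]
        exact one_div_le_one_div_of_le (by positivity) huge
      have hδ1 : δ ≤ 1 := by
        have h1 : 1 / ((i:ℝ) + 1) ≤ 1 := by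
          rw [div_le_one (by positivity)]
          have : (0:ℝ) ≤ (i:ℝ) := Nat.cast_nonneg i
          linarith
        linarith
      -- key algebraic identities
      have hI2 : s * u ^ 2 = 8 * (X * Y) + s * δ ^ 2 := by
        rw [hu, hδ]; linear_combination (4 * X * Y) * hs2
      have hud2 : u ^ 2 * δ ^ 2 = 1 := by linear_combination (u * δ + 1) * hud
      have hXYδ : X * Y * δ ^ 2 / 2 = s / 16 - s * δ ^ 4 / 16 := by
        linear_combination (-δ ^ 2 / 16) * hI2 + (s / 16) * hud2
      set c := (X * Y / 2 - Kk) * δ ^ 2 with hc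
      clear_value c
      set Z : ℤ := (x:ℤ) ^ 3 * (y:ℤ) - (2 * (x:ℤ) ^ 2 + 1) * (b:ℤ) + (m:ℤ) with hZ
      have hZR : ((Z : ℤ) : ℝ) = X ^ 3 * Y - (2 * X ^ 2 + 1) * Kk + (m : ℝ) := by
        rw [hZ, hX, hY, hKk]; push_cast; ring
      have key : s * (X * Y - Kk) ^ 2 = ((Z : ℤ) : ℝ) + (1/2 + s * Kk ^ 2 - c) := by
        rw [hZR, hc, hδ]
        linear_combination ((X * Y / 2 - Kk) * Y ^ 2) * hs2 - (X * Y / 2 - Kk) * hxyR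
          + (1/2) * hmR
      have haR : (a : ℝ) = X * Y - Kk := by
        have hcast : (a : ℝ) + Kk = X * Y := by
          rw [hX, hY, hKk]; exact_mod_cast hab
        linarith
      rw [haR, key, add_comm ((Z:ℤ):ℝ), fpa_add_int] at ha
      -- bounds on c
      have hKk0 : (0:ℝ) ≤ Kk := by rw [hKk]; exact Nat.cast_nonneg b
      have hKkm : Kk ≤ (m : ℝ) := by rw [hKk]; exact_mod_cast hbm
      have hc0 : 0 ≤ c := by
        rw [hc]
        apply mul_nonneg _ (sq_nonneg δ)
        linarith [hmR, hKkm]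
      have hsle : s ≤ 3/2 := by
        have h9 : Real.sqrt 2 < 3/2 := by
          rw [show (3:ℝ)/2 = Real.sqrt ((3/2)^2) by rw [Real.sqrt_sq]; norm_num]
          exact Real.sqrt_lt_sqrt (by norm_num) (by norm_num)
        rw [hsdef]; linarith
      have hcle : c ≤ s / 16 := by
        have h1 : c ≤ X * Y * δ ^ 2 / 2 := by
          rw [hc]; linarith only [mul_nonneg hKk0 (sq_nonneg δ)]
        have h2 : (0:ℝ) ≤ s * δ ^ 4 / 16 := by positivity
        linarith [hXYδ]
      rcases lt_or_ge b K₀ with hbK | hbK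
      · -- case B : b small, use minimum distance d
        have hgb : d ≤ fpa (s * Kk ^ 2 + 1/2 - s/16) := by
          have hgb' := hdm b hbK
          rw [← hKk] at hgb'
          exact hgb'
        have hdiff : s/16 - c ≤ d/3 := by
          have e : s/16 - c = s * δ ^ 4 / 16 + Kk * δ ^ 2 := by
            rw [hc]; linear_combination -hXYδ
          have h4 : δ ^ 4 ≤ δ ^ 2 := pow_le_pow_of_le_one hδpos.le hδ1 (by norm_num)
          have hsδ : s * δ ^ 4 / 16 ≤ δ ^ 2 := by
            have h5 : s * δ ^ 4 ≤ (3/2) * δ ^ 4 :=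
              mul_le_mul_of_nonneg_right hsle (pow_nonneg hδpos.le 4)
            linarith only [h5, h4, sq_nonneg δ]
          have hKkK : Kk ≤ (K₀ : ℝ) := by rw [hKk]; exact_mod_cast hbK.le
          have hδsq : δ ^ 2 ≤ δ := by
            rw [sq]; exact mul_le_of_le_one_left hδpos.le hδ1
          have hb1 : s * δ ^ 4 / 16 + Kk * δ ^ 2 ≤ ((K₀:ℝ) + 1) * δ := by
            have h6 : Kk * δ ^ 2 ≤ Kk * δ := mul_le_mul_of_nonneg_left hδsq hKk0
            have h7 : Kk * δ ≤ (K₀:ℝ) * δ := mul_le_mul_of_nonneg_right hKkK hδpos.le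
            linarith only [h6, h7, hsδ, hδsq]
          have hb2 : ((K₀:ℝ) + 1) * δ ≤ ((K₀:ℝ) + 1) / ((i:ℝ) + 1) := by
            rw [div_eq_mul_one_div]
            apply mul_le_mul_of_nonneg_left hδle (by positivity)
          have hb3 : ((K₀:ℝ) + 1) / ((i:ℝ) + 1) ≤ d / 3 := by
            rw [div_le_div_iff₀ (by positivity) (by norm_num)]
            rw [div_lt_iff₀ hd] at hI₁
            have hiI : (I₁:ℝ) ≤ (i:ℝ) := by exact_mod_cast hiI₁
            have h8 : d * (I₁:ℝ) ≤ d * (i:ℝ) := mul_le_mul_of_nonneg_left hiI hd.le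
            linarith only [hI₁, h8, hd]
          linarith only [e, hb1, hb2, hb3]
        have hlow : d - (s/16 - c) ≤ fpa (1/2 + s * Kk ^ 2 - c) := by
          have hl := fpa_lower (s * Kk ^ 2 + 1/2 - s/16) (s/16 - c)
          have harg : (s * Kk ^ 2 + 1/2 - s/16) + (s/16 - c) = 1/2 + s * Kk ^ 2 - c := by ring
          rw [harg] at hl
          rw [abs_of_nonneg (by linarith only [hcle] : (0:ℝ) ≤ s/16 - c)] at hl
          linarith only [hl, hgb]
        linarith only [ha, hlow, hdiff, hεad, hd]
      · -- case A : b large, ε b < 1/8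
        have hεb : ε b < 1/8 := hK₀' b hbK
        simp only [fpa] at hb
        set w := round (s * Kk ^ 2) with hw
        clear_value w
        have hθ : |s * Kk ^ 2 - (w:ℝ)| < 1/8 := lt_of_le_of_lt hb hεb
        rw [abs_lt] at hθ
        have hr : fpa (1/2 + s * Kk ^ 2 - c) = fpa ((s * Kk ^ 2 - (w:ℝ)) + 1/2 - c) := by
          have harg : 1/2 + s * Kk ^ 2 - c = ((s * Kk ^ 2 - (w:ℝ)) + 1/2 - c) + (w:ℝ) := by ring
          rw [harg, fpa_add_int]
        set r := (s * Kk ^ 2 - (w:ℝ)) + 1/2 - c with hrdef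
        clear_value r
        have hr0 : 1/4 ≤ r := by
          rw [hrdef]
          have hc32 : c ≤ 3/32 := by linarith only [hcle, hsle]
          linarith only [hθ.1, hc32]
        have hr1 : r ≤ 5/8 := by
          rw [hrdef]
          linarith only [hθ.2, hc0]
        have hmin : (1:ℝ)/4 ≤ fpa r := by
          have h := fpa_min r (by linarith only [hr0]) (by linarith only [hr1])
          have h2 : (1:ℝ)/4 ≤ min r (1 - r) := le_min (by linarith only [hr0]) (by linarith only [hr1])
          linarith only [h, h2]
        rw [hr] at ha
        linarith only [ha, hmin, hεa8]
    exact Set.Infinite.mono hIci (Set.Ici_infinite I)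
end

section
/- Fix an integer d ≥ 3. There exist a closed, uncountable set E ⊂ ℝ and a constant ε₀ > 0 such that for every function ε : ℕ → ℝ with ε(n) ≤ ε₀ for all n and every α ∈ E, the set B(ε,α,d) = {n ∈ ℕ : ‖α·n^d‖ ≤ ε(n)} is not a basis of order 2; that is, infinitely many natural numbers are not sums of two elements of B(ε,α,d). -/
open Filter
open scoped Pointwise

/-- `B ε α d = {n ∈ ℕ : ‖α n^d‖ ≤ ε n}`. -/
def B (ε : ℕ → ℝ) (α : ℝ) (d : ℕ) : Set ℕ := {n : ℕ | fpa (α * (n : ℝ) ^ d) ≤ ε n}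

/-! ### Basic facts about `fpa` -/

lemma fpa_le_abs_sub_int (x : ℝ) (m : ℤ) : fpa x ≤ |x - m| := by
  unfold fpa
  rcases le_or_gt (1/2) |x - (m : ℝ)| with h | h
  · exact (abs_sub_round x).trans h
  · have hm : round x = m := by
      rw [round_eq]
      have h1 := abs_lt.mp h
      apply Int.floor_eq_iff.mpr
      constructor
      · linarith
      · linarith
    rw [hm]

lemma fpa_add_le (x y : ℝ) : fpa (x + y) ≤ fpa x + fpa y := by
  calc fpa (x + y) ≤ |x + y - ((round x + round y : ℤ) : ℝ)| := fpa_le_abs_sub_int _ _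
    _ = |(x - round x) + (y - round y)| := by push_cast; ring_nf
    _ ≤ |x - round x| + |y - round y| := abs_add_le _ _
    _ = fpa x + fpa y := rfl

lemma fpa_sub_le (x y : ℝ) : fpa (x - y) ≤ fpa x + fpa y := by
  calc fpa (x - y) ≤ |x - y - ((round x - round y : ℤ) : ℝ)| := fpa_le_abs_sub_int _ _
    _ = |(x - round x) - (y - round y)| := by push_cast; ring_nf
    _ ≤ |x - round x| + |y - round y| := abs_sub _ _
    _ = fpa x + fpa y := rfl

lemma fpa_intCast_add (m : ℤ) (x : ℝ) : fpa ((m : ℝ) + x) = fpa x := by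
  apply le_antisymm
  · calc fpa ((m : ℝ) + x) ≤ |(m : ℝ) + x - ((m + round x : ℤ) : ℝ)| := fpa_le_abs_sub_int _ _
      _ = |x - round x| := by push_cast; ring_nf
      _ = fpa x := rfl
  · calc fpa x ≤ |x - ((round ((m : ℝ) + x) - m : ℤ) : ℝ)| := fpa_le_abs_sub_int _ _
      _ = |(m : ℝ) + x - round ((m : ℝ) + x)| := by push_cast; ring_nf
      _ = fpa ((m : ℝ) + x) := rfl

lemma fpa_half_add {t : ℝ} (ht : |t| ≤ 1/8) : 3/8 ≤ fpa (1/2 + t) := by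
  unfold fpa
  set z : ℤ := round ((1:ℝ)/2 + t) with hz
  have hz2 : (1/2 : ℝ) ≤ |1/2 - (z : ℝ)| := by
    rcases le_or_gt z 0 with h | h
    · have : (z : ℝ) ≤ 0 := by exact_mod_cast h
      rw [abs_of_nonneg (by linarith)]; linarith
    · have h1 : (1 : ℤ) ≤ z := h
      have : (1 : ℝ) ≤ (z : ℝ) := by exact_mod_cast h1
      rw [abs_of_nonpos (by linarith)]; linarith
  have htri : |1/2 - (z : ℝ)| ≤ |1/2 + t - z| + |t| := by
    have h := abs_add_le (1/2 + t - (z : ℝ)) (-t)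
    have he : (1/2 + t - (z : ℝ)) + (-t) = 1/2 - z := by ring
    rw [he] at h
    simpa using h
  have := abs_nonneg t
  linarith

/-! ### The key blocking lemma -/

lemma parity_pow_sum {a b d N : ℕ} (hd : d ≠ 0) (hab : a + b = N) (hN : Odd N) :
    Odd (a ^ d + b ^ d) := by
  have hob : Odd (a + b) := hab ▸ hN
  rcases Nat.odd_add.mp hob with h
  by_cases ha : Odd a
  · exact (ha.pow).add_even ((h.mp ha).pow_of_ne_zero hd)
  · have hea : Even a := Nat.not_odd_iff_even.mp ha
    have hb : Odd b := by
      by_contra hb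
      exact ha (h.mpr (Nat.not_odd_iff_even.mp hb))
    exact (hea.pow_of_ne_zero hd).add_odd hb.pow

/-- The core computation: if `c` is an odd multiple of `N` with `|c| ≤ N^d`,
then `α c` is nearly a half-integer. -/
lemma core_half (d N s : ℕ) (hN : 0 < N) (τ : ℝ) (hτ0 : 0 ≤ τ)
    (hτ1 : τ * (N : ℝ) ^ d ≤ 1/8) (c : ℤ) (hco : Odd c) (hcd : (N : ℤ) ∣ c)
    (hcb : |(c : ℝ)| ≤ (N : ℝ) ^ d) :
    3/8 ≤ fpa ((1/2 + (s : ℝ)/(N : ℝ) + τ) * (c : ℝ)) := by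
  obtain ⟨m, hm⟩ := hco
  obtain ⟨e, he⟩ := hcd
  have hNR : (N : ℝ) ≠ 0 := by positivity
  have hcR1 : (c : ℝ) = 2 * (m : ℝ) + 1 := by exact_mod_cast hm
  have hcR2 : (c : ℝ) = (N : ℝ) * (e : ℝ) := by exact_mod_cast he
  have h3 : (s : ℝ) * (c : ℝ) / (N : ℝ) = (s : ℝ) * (e : ℝ) := by
    rw [hcR2]; field_simp
  have key : (1/2 + (s : ℝ)/(N : ℝ) + τ) * (c : ℝ)
      = ((m + s * e : ℤ) : ℝ) + (1/2 + τ * (c : ℝ)) := by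
    have expand : (1/2 + (s : ℝ)/(N : ℝ) + τ) * (c : ℝ)
        = (c : ℝ)/2 + (s : ℝ) * (c : ℝ) / (N : ℝ) + τ * (c : ℝ) := by ring
    rw [expand, h3]
    push_cast
    linarith [hcR1]
  rw [key, fpa_intCast_add]
  apply fpa_half_add
  rw [abs_mul, abs_of_nonneg hτ0]
  calc τ * |(c : ℝ)| ≤ τ * (N : ℝ) ^ d := by
        exact mul_le_mul_of_nonneg_left hcb hτ0
    _ ≤ 1/8 := hτ1

lemma blocking (d N s : ℕ) (hd : d ≠ 0) (hNodd : Odd N) (hN : 0 < N)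
    (τ : ℝ) (hτ0 : 0 ≤ τ) (hτ1 : τ * (N : ℝ) ^ d ≤ 1/8)
    (ε : ℕ → ℝ) (hε : ∀ n, ε n ≤ 1/8) :
    N ∉ B ε (1/2 + (s : ℝ)/(N : ℝ) + τ) d + B ε (1/2 + (s : ℝ)/(N : ℝ) + τ) d := by
  intro hmem
  set α : ℝ := 1/2 + (s : ℝ)/(N : ℝ) + τ with hα
  obtain ⟨a, ha, b, hb, hab⟩ := Set.mem_add.mp hmem
  have hfa : fpa (α * (a : ℝ) ^ d) ≤ 1/8 := le_trans ha (hε a)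
  have hfb : fpa (α * (b : ℝ) ^ d) ≤ 1/8 := le_trans hb (hε b)
  have hZab : (a : ℤ) + (b : ℤ) = (N : ℤ) := by exact_mod_cast hab
  have hRab : (a : ℝ) + (b : ℝ) = (N : ℝ) := by exact_mod_cast hab
  have haN : (a : ℝ) ≤ (N : ℝ) := by
    have : a ≤ N := by omega
    exact_mod_cast this
  have hbN : (b : ℝ) ≤ (N : ℝ) := by
    have : b ≤ N := by omega
    exact_mod_cast this
  have hapow : (a : ℝ) ^ d ≤ (N : ℝ) ^ d := by
    apply pow_le_pow_left₀ (by positivity) haN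
  have hbpow : (b : ℝ) ^ d ≤ (N : ℝ) ^ d := by
    apply pow_le_pow_left₀ (by positivity) hbN
  -- b ≡ -a mod N
  have hmodb : ((b : ℤ)) ≡ (-(a : ℤ)) [ZMOD (N : ℤ)] := by
    apply Int.ModEq.symm
    apply Int.modEq_iff_dvd.mpr
    exact ⟨1, by linarith⟩
  have hoddsum : Odd ((a : ℤ) ^ d + (b : ℤ) ^ d) := by
    have h1 : Odd (a ^ d + b ^ d) := parity_pow_sum hd hab hNodd
    obtain ⟨t, ht⟩ := h1
    exact ⟨(t : ℤ), by exact_mod_cast ht⟩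
  rcases Nat.even_or_odd d with hde | hdo
  · -- d even : use c = b^d - a^d
    set c : ℤ := (b : ℤ) ^ d - (a : ℤ) ^ d with hc
    have hcodd : Odd c := by
      obtain ⟨t, ht⟩ := hoddsum
      exact ⟨t - (a : ℤ) ^ d, by rw [hc]; linarith⟩
    have hcdvd : (N : ℤ) ∣ c := by
      have h2 : ((b : ℤ)) ^ d ≡ ((-(a : ℤ)) ^ d) [ZMOD (N : ℤ)] := hmodb.pow d
      rw [hde.neg_pow] at h2
      have h3 := h2.dvd
      have h5 : c = -((a : ℤ) ^ d - (b : ℤ) ^ d) := by rw [hc]; ring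
      rw [h5]
      exact dvd_neg.mpr h3
    have hcb : |(c : ℝ)| ≤ (N : ℝ) ^ d := by
      have h4 : (c : ℝ) = (b : ℝ) ^ d - (a : ℝ) ^ d := by rw [hc]; push_cast; ring
      rw [h4, abs_le]
      constructor
      · have : (0:ℝ) ≤ (b : ℝ) ^ d := by positivity
        linarith
      · have : (0:ℝ) ≤ (a : ℝ) ^ d := by positivity
        linarith
    have h38 := core_half d N s hN τ hτ0 hτ1 c hcodd hcdvd hcb
    have hsum : α * (c : ℝ) = α * (b : ℝ) ^ d - α * (a : ℝ) ^ d := by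
      rw [hc]; push_cast; ring
    have h14 : fpa (α * (c : ℝ)) ≤ 1/4 := by
      rw [hsum]
      exact le_trans (fpa_sub_le _ _) (by linarith)
    linarith
  · -- d odd : use c = a^d + b^d
    set c : ℤ := (a : ℤ) ^ d + (b : ℤ) ^ d with hc
    have hcodd : Odd c := hoddsum
    have hcdvd : (N : ℤ) ∣ c := by
      have h2 : ((b : ℤ)) ^ d ≡ ((-(a : ℤ)) ^ d) [ZMOD (N : ℤ)] := hmodb.pow d
      rw [hdo.neg_pow] at h2
      have h3 := h2.dvd
      have h5 : c = -((-(a : ℤ) ^ d) - (b : ℤ) ^ d) := by rw [hc]; ring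
      rw [h5]
      exact dvd_neg.mpr h3
    have hcb : |(c : ℝ)| ≤ (N : ℝ) ^ d := by
      have h4 : (c : ℝ) = (a : ℝ) ^ d + (b : ℝ) ^ d := by rw [hc]; push_cast; ring
      rw [h4]
      rw [abs_of_nonneg (by positivity)]
      calc (a : ℝ) ^ d + (b : ℝ) ^ d ≤ ((a : ℝ) + (b : ℝ)) ^ d :=
            pow_add_pow_le (by positivity) (by positivity) hd
        _ = (N : ℝ) ^ d := by rw [hRab]
    have h38 := core_half d N s hN τ hτ0 hτ1 c hcodd hcdvd hcb
    have hsum : α * (c : ℝ) = α * (a : ℝ) ^ d + α * (b : ℝ) ^ d := by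
      rw [hc]; push_cast; ring
    have h14 : fpa (α * (c : ℝ)) ≤ 1/4 := by
      rw [hsum]
      exact le_trans (fpa_add_le _ _) (by linarith)
    linarith

/-! ### The Cantor-type family of Liouville-like numbers -/

/-- exponents -/
def ee (d k : ℕ) : ℕ := (d + 2) ^ (k + 1)

/-- denominators -/
def NN (d k : ℕ) : ℕ := 3 ^ ee d k

/-- digits -/
def dig (x : ℕ → Bool) (k : ℕ) : ℕ := if x k then 2 else 1

noncomputable def FF (d : ℕ) (x : ℕ → Bool) : ℝ := 1/2 + ∑' k, (dig x k : ℝ) / (NN d k : ℝ)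

lemma NN_pos (d k : ℕ) : 0 < NN d k := Nat.pow_pos (by norm_num)

lemma NN_odd (d k : ℕ) : Odd (NN d k) := Odd.pow (by decide)

lemma ee_lt (d k : ℕ) : ee d k < ee d (k+1) := by
  apply Nat.pow_lt_pow_right (by omega)
  omega

lemma NN_strictMono (d : ℕ) : StrictMono (NN d) := by
  apply strictMono_nat_of_lt_succ
  intro k
  exact Nat.pow_lt_pow_right (by norm_num) (ee_lt d k)

lemma dig_le (x : ℕ → Bool) (k : ℕ) : dig x k ≤ 2 := by
  unfold dig; split <;> omega

lemma dig_pos (x : ℕ → Bool) (k : ℕ) : 0 < dig x k := by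
  unfold dig; split <;> omega

lemma k_le_ee (d k : ℕ) : k ≤ ee d k := by
  calc k ≤ 2 ^ (k+1) := by
        calc k ≤ 2 ^ k := Nat.le_of_lt Nat.lt_two_pow_self
          _ ≤ 2 ^ (k+1) := Nat.pow_le_pow_right (by norm_num) (by omega)
    _ ≤ (d+2) ^ (k+1) := Nat.pow_le_pow_left (by omega) _
  
lemma term_le (d : ℕ) (x : ℕ → Bool) (k : ℕ) :
    (dig x k : ℝ) / (NN d k : ℝ) ≤ 2 * (1/3 : ℝ) ^ k := by
  have h1 : (3 : ℝ) ^ k ≤ (NN d k : ℝ) := by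
    have : (3:ℕ) ^ k ≤ NN d k := Nat.pow_le_pow_right (by norm_num) (k_le_ee d k)
    exact_mod_cast this
  have h2 : (0:ℝ) < (3:ℝ)^k := by positivity
  have h3 : (0:ℝ) < (NN d k : ℝ) := by exact_mod_cast NN_pos d k
  have h4 : (dig x k : ℝ) ≤ 2 := by exact_mod_cast dig_le x k
  calc (dig x k : ℝ) / (NN d k : ℝ) ≤ 2 / (3:ℝ)^k :=
        div_le_div₀ (by norm_num) h4 h2 h1
    _ = 2 * (1/3:ℝ)^k := by rw [div_pow, one_pow]; ring

lemma summable_terms (d : ℕ) (x : ℕ → Bool) :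
    Summable (fun k => (dig x k : ℝ) / (NN d k : ℝ)) := by
  apply Summable.of_nonneg_of_le (fun k => by positivity) (term_le d x)
  exact (summable_geometric_of_lt_one (by norm_num) (by norm_num)).mul_left 2


lemma ee_ge (d K : ℕ) : 5 ≤ d + 2 → 5 ≤ ee d K := by
  intro h
  calc 5 ≤ d + 2 := h
    _ ≤ (d+2) ^ (K+1) := Nat.le_self_pow (by omega) _

lemma ee_pos (d k : ℕ) : 1 ≤ ee d k := Nat.one_le_pow _ _ (by omega)

lemma exp_grow (d K : ℕ) : ∀ k, ee d (K+1) + k ≤ ee d (k + K + 1) := by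
  intro k
  induction k with
  | zero => simp
  | succ k ih =>
      have h1 : ee d (k + 1 + K + 1) = (d+2) * ee d (k + K + 1) := by
        unfold ee
        rw [← pow_succ']
        congr 1
        omega
      have h2 : 1 ≤ ee d (k + K + 1) := ee_pos d _
      have h3 : 2 * ee d (k + K + 1) ≤ (d+2) * ee d (k + K + 1) :=
        Nat.mul_le_mul_right _ (by omega)
      omega

lemma tail_le (d : ℕ) (hd : 3 ≤ d) (x : ℕ → Bool) (K : ℕ) :
    (∑' k, (dig x (k + (K+1)) : ℝ) / (NN d (k + (K+1)) : ℝ)) ≤ 1 / (8 * (NN d K : ℝ) ^ d) := by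
  set A := ee d (K+1) with hA
  have hterm : ∀ k, (dig x (k + (K+1)) : ℝ) / (NN d (k + (K+1)) : ℝ)
      ≤ (2 / (3:ℝ)^A) * (1/3:ℝ)^k := by
    intro k
    have h1 : (3:ℕ) ^ (A + k) ≤ 3 ^ (ee d (k + (K+1))) := by
      apply Nat.pow_le_pow_right (by norm_num)
      have h := exp_grow d K k
      have he : k + (K+1) = k + K + 1 := by omega
      rw [he]
      exact h
    have h1' : (3:ℕ) ^ (ee d (k + (K+1))) = NN d (k + (K+1)) := rfl
    rw [h1'] at h1
    have h1R : (3:ℝ) ^ (A + k) ≤ (NN d (k + (K+1)) : ℝ) := by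
      exact_mod_cast h1
    have h2 : (0:ℝ) < (3:ℝ) ^ (A + k) := by positivity
    have h4 : (dig x (k + (K+1)) : ℝ) ≤ 2 := by exact_mod_cast dig_le x _
    calc (dig x (k + (K+1)) : ℝ) / (NN d (k + (K+1)) : ℝ)
        ≤ 2 / (3:ℝ)^(A+k) := div_le_div₀ (by norm_num) h4 h2 h1R
      _ = (2 / (3:ℝ)^A) * (1/3:ℝ)^k := by
          rw [pow_add, div_pow, one_pow]
          field_simp
    
  have hsum2 : Summable (fun k => (2 / (3:ℝ)^A) * (1/3:ℝ)^k) :=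
    (summable_geometric_of_lt_one (by norm_num) (by norm_num)).mul_left _
  have htail_summable : Summable (fun k => (dig x (k + (K+1)) : ℝ) / (NN d (k + (K+1)) : ℝ)) := by
    exact (summable_nat_add_iff (f := fun n => (dig x n : ℝ) / (NN d n : ℝ)) (K+1)).mpr (summable_terms d x)
  have hts : (∑' k, (dig x (k + (K+1)) : ℝ) / (NN d (k + (K+1)) : ℝ))
      ≤ ∑' k, (2 / (3:ℝ)^A) * (1/3:ℝ)^k := htail_summable.tsum_le_tsum hterm hsum2
  have hgeo : (∑' k : ℕ, (2 / (3:ℝ)^A) * (1/3:ℝ)^k) = (2 / (3:ℝ)^A) * (3/2 : ℝ) := by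
    rw [tsum_mul_left, tsum_geometric_of_lt_one (by norm_num) (by norm_num)]
    norm_num
  have hfin : (2 / (3:ℝ)^A) * (3/2 : ℝ) = 3 / (3:ℝ)^A := by ring
  -- now the numeric inequality 3/3^A ≤ 1/(8 (NN d K)^d)
  have hNNK : ((NN d K : ℝ)) ^ d = (3:ℝ) ^ (ee d K * d) := by
    unfold NN
    push_cast
    rw [← pow_mul]
  have hAineq : 24 * (3:ℕ) ^ (ee d K * d) ≤ 3 ^ A := by
    have hA2 : A = ee d K * d + ee d K * 2 := by
      rw [hA]
      unfold ee
      rw [pow_succ]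
      ring
    rw [hA2, pow_add]
    have h10 : (24:ℕ) ≤ 3 ^ (ee d K * 2) := by
      have h5 : 5 ≤ ee d K := ee_ge d K (by omega)
      calc (24:ℕ) ≤ 3 ^ 3 := by norm_num
        _ ≤ 3 ^ (ee d K * 2) := Nat.pow_le_pow_right (by norm_num) (by omega)
    calc 24 * 3 ^ (ee d K * d) ≤ 3 ^ (ee d K * d) * 3 ^ (ee d K * 2) := by
          rw [mul_comm]
          exact Nat.mul_le_mul_left _ h10
      _ = 3 ^ (ee d K * d) * 3 ^ (ee d K * 2) := rfl
  have hAineqR : 24 * (3:ℝ) ^ (ee d K * d) ≤ (3:ℝ) ^ A := by exact_mod_cast hAineq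
  have hlast : 3 / (3:ℝ)^A ≤ 1 / (8 * (NN d K : ℝ) ^ d) := by
    rw [hNNK]
    rw [div_le_div_iff₀ (by positivity) (by positivity)]
    calc 3 * (8 * (3:ℝ) ^ (ee d K * d)) = 24 * (3:ℝ) ^ (ee d K * d) := by ring
      _ ≤ (3:ℝ) ^ A := hAineqR
      _ = 1 * (3:ℝ)^A := by ring
  calc (∑' k, (dig x (k + (K+1)) : ℝ) / (NN d (k + (K+1)) : ℝ))
      ≤ (2 / (3:ℝ)^A) * (3/2 : ℝ) := by rw [← hgeo]; exact hts
    _ = 3 / (3:ℝ)^A := hfin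
    _ ≤ 1 / (8 * (NN d K : ℝ) ^ d) := hlast

lemma tail_nonneg (d : ℕ) (x : ℕ → Bool) (K : ℕ) :
    0 ≤ ∑' k, (dig x (k + (K+1)) : ℝ) / (NN d (k + (K+1)) : ℝ) :=
  tsum_nonneg (fun k => by positivity)

lemma prefix_eq (d : ℕ) (x : ℕ → Bool) :
    ∀ K, ∃ s : ℕ, (∑ k ∈ Finset.range (K+1), (dig x k : ℝ) / (NN d k : ℝ))
      = (s : ℝ) / (NN d K : ℝ) := by
  intro K
  induction K with
  | zero =>
      exact ⟨dig x 0, by rw [Finset.sum_range_one]⟩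
  | succ K ih =>
      obtain ⟨s, hs⟩ := ih
      have hdvd : NN d K ∣ NN d (K+1) := pow_dvd_pow 3 (le_of_lt (ee_lt d K))
      have hKne : ((NN d K : ℝ)) ≠ 0 := by
        have := NN_pos d K; positivity
      have hK1ne : ((NN d (K+1) : ℝ)) ≠ 0 := by
        have := NN_pos d (K+1); positivity
      have hq : ((NN d (K+1) / NN d K : ℕ) : ℝ) = (NN d (K+1) : ℝ) / (NN d K : ℝ) :=
        Nat.cast_div hdvd hKne
      refine ⟨s * (NN d (K+1) / NN d K) + dig x (K+1), ?_⟩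
      rw [Finset.sum_range_succ, hs]
      push_cast [hq]
      field_simp

lemma FF_decomp (d : ℕ) (x : ℕ → Bool) (K : ℕ) :
    ∃ s : ℕ, FF d x = 1/2 + (s : ℝ) / (NN d K : ℝ)
      + ∑' k, (dig x (k + (K+1)) : ℝ) / (NN d (k + (K+1)) : ℝ) := by
  obtain ⟨s, hs⟩ := prefix_eq d x K
  refine ⟨s, ?_⟩
  unfold FF
  rw [← Summable.sum_add_tsum_nat_add (K+1) (summable_terms d x), hs]
  ring


lemma FF_cont (d : ℕ) : Continuous (FF d) := by
  unfold FF
  apply Continuous.add continuous_const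
  apply continuous_tsum (u := fun k => 2 * (1/3 : ℝ)^k)
  · intro k
    have h1 : Continuous (fun x : ℕ → Bool => x k) := continuous_apply k
    have h2 : Continuous (fun b : Bool => ((if b then 2 else 1 : ℕ) : ℝ)) :=
      continuous_of_discreteTopology
    exact (h2.comp h1).div_const _
  · exact (summable_geometric_of_lt_one (by norm_num) (by norm_num)).mul_left 2
  · intro k x
    rw [Real.norm_eq_abs, abs_of_nonneg (by positivity)]
    exact term_le d x k

lemma FF_inj (d : ℕ) (hd : 3 ≤ d) : Function.Injective (FF d) := by
  classical
  intro x y hxy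
  by_contra hne
  have hex : ∃ k, x k ≠ y k := Function.ne_iff.mp hne
  set k0 := Nat.find hex with hk0def
  have hk0 : x k0 ≠ y k0 := Nat.find_spec hex
  have hmin : ∀ j, j < k0 → x j = y j := by
    intro j hj
    by_contra h
    exact Nat.find_min hex hj h
  set g : ℕ → ℝ := fun k => (dig x k : ℝ)/(NN d k : ℝ) - (dig y k : ℝ)/(NN d k : ℝ) with hg
  have hgs : Summable g := (summable_terms d x).sub (summable_terms d y)
  have hFFd : (0:ℝ) = ∑' k, g k := by
    have h1 : FF d x - FF d y = ∑' k, g k := by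
      unfold FF
      rw [hg]
      rw [Summable.tsum_sub (summable_terms d x) (summable_terms d y)]
      ring
    rw [← h1, hxy]
    ring
  have hsplit := Summable.sum_add_tsum_nat_add (f := g) (k0+1) hgs
  have hpre : (∑ k ∈ Finset.range (k0+1), g k) = g k0 := by
    rw [Finset.sum_range_succ]
    have hzero : (∑ k ∈ Finset.range k0, g k) = 0 := by
      apply Finset.sum_eq_zero
      intro j hj
      have hxj := hmin j (Finset.mem_range.mp hj)
      have : dig x j = dig y j := by unfold dig; rw [hxj]
      show (dig x j : ℝ)/(NN d j : ℝ) - (dig y j : ℝ)/(NN d j : ℝ) = 0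
      rw [this]
      ring
    rw [hzero, zero_add]
  have hNpos : (0:ℝ) < (NN d k0 : ℝ) := by exact_mod_cast NN_pos d k0
  have hgk0 : |g k0| = 1/(NN d k0 : ℝ) := by
    have : |(dig x k0 : ℝ) - (dig y k0 : ℝ)| = 1 := by
      rcases Bool.eq_false_or_eq_true (x k0) with hx | hx <;>
        rcases Bool.eq_false_or_eq_true (y k0) with hy | hy <;>
          simp [hx, hy] at hk0 ⊢ <;> norm_num [dig, hx, hy]
    have hgval : g k0 = ((dig x k0 : ℝ) - (dig y k0 : ℝ))/(NN d k0 : ℝ) := by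
      show (dig x k0 : ℝ)/(NN d k0 : ℝ) - (dig y k0 : ℝ)/(NN d k0 : ℝ)
        = ((dig x k0 : ℝ) - (dig y k0 : ℝ))/(NN d k0 : ℝ)
      ring
    rw [hgval, abs_div, this, abs_of_pos hNpos]
  -- tail difference bound
  have hsx : Summable (fun k => (dig x (k + (k0+1)) : ℝ) / (NN d (k + (k0+1)) : ℝ)) :=
    (summable_nat_add_iff (f := fun n => (dig x n : ℝ) / (NN d n : ℝ)) (k0+1)).mpr
      (summable_terms d x)
  have hsy : Summable (fun k => (dig y (k + (k0+1)) : ℝ) / (NN d (k + (k0+1)) : ℝ)) :=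
    (summable_nat_add_iff (f := fun n => (dig y n : ℝ) / (NN d n : ℝ)) (k0+1)).mpr
      (summable_terms d y)
  have htaileq : (∑' k, g (k + (k0+1)))
      = (∑' k, (dig x (k + (k0+1)) : ℝ) / (NN d (k + (k0+1)) : ℝ))
        - (∑' k, (dig y (k + (k0+1)) : ℝ) / (NN d (k + (k0+1)) : ℝ)) := by
    rw [← Summable.tsum_sub hsx hsy]
  have hT : |∑' k, g (k + (k0+1))| ≤ 1/(8 * (NN d k0 : ℝ)^d) := by
    rw [htaileq, abs_le]
    constructor
    · have h1 := tail_le d hd y k0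
      have h2 := tail_nonneg d x k0
      linarith
    · have h1 := tail_le d hd x k0
      have h2 := tail_nonneg d y k0
      linarith
  have hNd : (NN d k0 : ℝ) ≤ (NN d k0 : ℝ)^d := by
    apply le_self_pow₀
    · have : (1:ℕ) ≤ NN d k0 := NN_pos d k0
      exact_mod_cast this
    · omega
  have hfrac : 1/(8 * (NN d k0 : ℝ)^d) ≤ 1/(8 * (NN d k0 : ℝ)) := by
    apply div_le_div_of_nonneg_left (by norm_num) (by positivity)
    linarith
  -- contradiction
  have hzero2 : g k0 + (∑' k, g (k + (k0+1))) = 0 := by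
    rw [hpre] at hsplit
    linarith [hFFd, hsplit]
  have : |g k0| ≤ 1/(8 * (NN d k0 : ℝ)) := by
    have h5 : g k0 = -(∑' k, g (k + (k0+1))) := by linarith
    rw [h5, abs_neg]
    exact hT.trans hfrac
  rw [hgk0] at this
  have : 1/(NN d k0 : ℝ) ≤ 1/(8 * (NN d k0 : ℝ)) := this
  have h8 : 8 * (NN d k0 : ℝ) ≤ (NN d k0 : ℝ) := by
    rw [div_le_div_iff₀ (by positivity) (by positivity)] at this
    linarith
  linarith

lemma FF_uncountable (d : ℕ) (hd : 3 ≤ d) : ¬ (Set.range (FF d)).Countable := by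
  intro hc
  have h2 := hc.preimage (FF_inj d hd)
  rw [Set.preimage_range] at h2
  have h3 : Countable (ℕ → Bool) := Set.countable_univ_iff.mp h2
  obtain ⟨g, hg⟩ := exists_surjective_nat (ℕ → Bool)
  obtain ⟨m, hm⟩ := hg (fun n => !(g n n))
  have hmm := congrFun hm m
  simp at hmm

theorem stmt_19 (d : ℕ) (hd : 3 ≤ d) :
    ∃ (E : Set ℝ) (ε₀ : ℝ), IsClosed E ∧ ¬ E.Countable ∧ 0 < ε₀ ∧
      ∀ ε : ℕ → ℝ, (∀ n, ε n ≤ ε₀) → ∀ α ∈ E,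
        {N : ℕ | N ∉ B ε α d + B ε α d}.Infinite := by
  classical
  refine ⟨Set.range (FF d), 1/8, ?_, ?_, by norm_num, ?_⟩
  · exact (isCompact_range (FF_cont d)).isClosed
  · exact FF_uncountable d hd
  · intro ε hε α hα
    obtain ⟨x, rfl⟩ := hα
    apply Set.infinite_of_injective_forall_mem (f := fun K : ℕ => NN d K)
      ((NN_strictMono d).injective)
    intro K
    show NN d K ∉ B ε (FF d x) d + B ε (FF d x) d
    obtain ⟨s, hs⟩ := FF_decomp d x K
    rw [hs]
    set τ : ℝ := ∑' k, (dig x (k + (K+1)) : ℝ) / (NN d (k + (K+1)) : ℝ) with hτ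
    have hNpos : (0:ℝ) < (NN d K : ℝ)^d := by
      have := NN_pos d K
      positivity
    have hτ1 : τ * (NN d K : ℝ)^d ≤ 1/8 := by
      have h1 : τ ≤ 1/(8 * (NN d K : ℝ)^d) := tail_le d hd x K
      calc τ * (NN d K : ℝ)^d ≤ (1/(8 * (NN d K : ℝ)^d)) * (NN d K : ℝ)^d :=
            mul_le_mul_of_nonneg_right h1 (le_of_lt hNpos)
        _ = 1/8 := by field_simp
    exact blocking d (NN d K) s (by omega) (NN_odd d K) (NN_pos d K)
      τ (tail_nonneg d x K) hτ1 ε hε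
end
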